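/- Summability for iBPDCA with (SC2) (Proposition 3.2(iii)-(iv)). In the iBPDCA setting with stopping criterion (SC2), if F is bounded below with ζ̃ := lim_{k→∞} (F(x^k) + σγ_max·D_φ(x^k, x^{k−1})), then Σ_{k=0}^∞ D_φ(x^{k+1}, x^k) ≤ (F(x^0) + σγ_max·D_φ(x^0, x^{−1}) − ζ̃)/(γ_min − L − σγ_max) < ∞ and Σ_{k=0}^∞ D_φ(x^k, x^{k+1}) ≤ (F(x^0) + σγ_max·D_φ(x^0, x^{−1}) − ζ̃)/γ_min < ∞; consequently D_φ(x^{k+1}, x^k) → 0 and D_φ(x^k, x^{k+1}) → 0. Moreover Σ_{k=0}^∞ (‖Δ^k‖² + |⟨Δ^k, x^{k+1} − x^k⟩| + δ_k) ≤ σγ_max Σ_{k=0}^∞ D_φ(x^k, x^{k−1}) < ∞, hence ‖Δ^k‖ → 0, |⟨Δ^k, x^{k+1} − x^k⟩| → 0 and δ_k → 0. -/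

import Mathlib

open Filter Topology Bornology RealInnerProductSpace
open scoped Classical

noncomputable section

/-- `ℝⁿ` with the Euclidean inner product. -/
abbrev E (n : ℕ) := EuclideanSpace ℝ (Fin n)

/-- Bregman distance `D_φ(x, y) = φ(x) − φ(y) − ⟨∇φ(y), x − y⟩` associated with the
kernel `φ` whose gradient is `φ'`. -/
def breg {n : ℕ} (φ : E n → ℝ) (φ' : E n → E n) (x y : E n) : ℝ :=
  φ x - φ y - ⟪φ' y, x - y⟫

/-- `ε`-subdifferential at `x` of the extended-real-valued convex function that is equal
to `h` on its domain `S` and `+∞` outside `S`: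
`∂_ε h(x) = {d : h(y) ≥ h(x) + ⟨d, y − x⟩ − ε for all y}` (the inequality being automatic
for `y ∉ S`). -/
def epsSubdiff {n : ℕ} (S : Set (E n)) (h : E n → ℝ) (ε : ℝ) (x : E n) : Set (E n) :=
  {d | ∀ y ∈ S, h x + ⟪d, y - x⟫ - ε ≤ h y}

/-- `prevSeq x xm k` is `x^{k-1}`, with `x^{-1} := xm`. -/
def prevSeq {n : ℕ} (x : ℕ → E n) (xm : E n) : ℕ → E n :=
  fun k => if k = 0 then xm else x (k - 1)

/-- The merit value `F(x^k) + σ γ_max D_φ(x^k, x^{k−1})`. -/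
def meritSeq {n : ℕ} (P₁ P₂ f φ : E n → ℝ) (φ' : E n → E n) (σ γmax : ℝ)
    (x : ℕ → E n) (xm : E n) (k : ℕ) : ℝ :=
  P₁ (x k) - P₂ (x k) + f (x k) + σ * γmax * breg φ φ' (x k) (prevSeq x xm k)

/-- First-order condition: a Bregman distance with convex differentiable kernel
is nonnegative. -/
lemma breg_nonneg_of_convexOn {n : ℕ} {U : Set (E n)}
    {φ : E n → ℝ} {φ' : E n → E n}
    (hφdiff : ∀ u ∈ U, HasGradientAt φ (φ' u) u)
    (hconv : ConvexOn ℝ U φ) {p q : E n} (hp : p ∈ U) (hq : q ∈ U) :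
    0 ≤ breg φ φ' p q := by
  set v := p - q with hv
  have hq0 : q + (0:ℝ) • v = q := by simp
  have hline : HasDerivAt (fun t : ℝ => q + t • v) v 0 := by
    simpa using ((hasDerivAt_id (0:ℝ)).smul_const v).const_add q
  have hg : HasDerivAt (fun t : ℝ => φ (q + t • v)) ⟪φ' q, v⟫ 0 := by
    have h := HasFDerivAt.comp_hasDerivAt 0 (hq0 ▸ (hφdiff q hq).hasFDerivAt) hline
    simp [InnerProductSpace.toDual_apply_apply] at h
    exact h
  have hslope : ∀ t ∈ Set.Ioc (0:ℝ) 1,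
      slope (fun t : ℝ => φ (q + t • v)) 0 t ≤ φ p - φ q := by
    intro t ht
    have hmem : q + t • v = (1 - t) • q + t • p := by
      rw [hv]; module
    have hcv := hconv.2 hq hp (by linarith [ht.2] : (0:ℝ) ≤ 1 - t) (le_of_lt ht.1) (by ring)
    simp only [smul_eq_mul] at hcv
    rw [slope_def_field]
    simp only [hmem, hq0]
    rw [sub_zero, div_le_iff₀ ht.1]
    nlinarith [hcv]
  have hlim : Tendsto (slope (fun t : ℝ => φ (q + t • v)) 0) (𝓝[>] 0) (𝓝 ⟪φ' q, v⟫) :=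
    (hasDerivAt_iff_tendsto_slope.mp hg).mono_left
      (nhdsWithin_mono 0 (fun t ht => ne_of_gt ht))
  have hfin : ⟪φ' q, v⟫ ≤ φ p - φ q :=
    le_of_tendsto hlim (eventually_of_mem
      (Ioc_mem_nhdsGT_of_mem (by norm_num : (0:ℝ) ∈ Set.Ico 0 1)) hslope)
  simp only [breg, ← hv]
  linarith

/-- Symmetrized Bregman distance identity. -/
lemma breg_add_breg {n : ℕ} (φ : E n → ℝ) (φ' : E n → E n) (a b : E n) :
    breg φ φ' a b + breg φ φ' b a = ⟪φ' a - φ' b, a - b⟫ := by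
  have h : b - a = -(a - b) := by abel
  simp only [breg, inner_sub_left, h, inner_neg_right]
  ring

/-- **Proposition 3.2(iii)-(iv).** Summability for iBPDCA with (SC2). -/
theorem ibpdca_sc2_summable
    {n : ℕ} (S U X : Set (E n)) (P₁ P₂ f φ : E n → ℝ)
    (f' φ' : E n → E n) (L γmin γmax σ : ℝ)
    (x : ℕ → E n) (xm : E n) (hxm : xm ∈ U) (γ δ : ℕ → ℝ) (ξ d Δ : ℕ → E n)
    -- `P₁` is proper, lower semicontinuous and convex (domain `S`, real values `P₁` on `S`)
    (hSne : S.Nonempty)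
    (hP₁conv : ConvexOn ℝ S P₁)
    (hP₁lsc : LowerSemicontinuous (fun y => if y ∈ S then (P₁ y : EReal) else (⊤ : EReal)))
    -- `P₂` is convex and continuous
    (hP₂conv : ConvexOn ℝ Set.univ P₂) (hP₂cont : Continuous P₂)
    -- `f` and `φ` are differentiable on the open convex set `U`, `φ` strictly convex on `U`
    (hUopen : IsOpen U) (hUconv : Convex ℝ U)
    (hfdiff : ∀ u ∈ U, HasGradientAt f (f' u) u)
    (hφdiff : ∀ u ∈ U, HasGradientAt φ (φ' u) u)
    (hφsc : StrictConvexOn ℝ U φ)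
    -- `(f, φ)` is `L`-smooth adaptable restricted on `X`
    (hL : 0 ≤ L)
    (hsmad : ∀ u ∈ X, ∀ v ∈ X, |f v - f u - ⟪f' u, v - u⟫| ≤ L * breg φ φ' v u)
    -- the iterates and the inexact optimality condition
    (hxmem : ∀ k, x k ∈ S ∩ U ∩ X)
    (hLγ : L < γmin) (hγ : ∀ k, γmin ≤ γ k ∧ γ k ≤ γmax)
    (hδpos : ∀ k, 0 ≤ δ k)
    (hξ : ∀ k, ξ k ∈ epsSubdiff Set.univ P₂ 0 (x k))
    (hd : ∀ k, d (k + 1) ∈ epsSubdiff S P₁ (δ k) (x (k + 1)))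
    (hΔ : ∀ k, Δ k = d (k + 1) + f' (x k) - ξ k + γ k • (φ' (x (k + 1)) - φ' (x k)))
    -- the stopping criterion
    (hσ0 : 0 ≤ σ) (hσ : σ < (γmin - L) / γmax)
    (hSC2 : ∀ k, ‖Δ k‖ ^ 2 + |⟪Δ k, x (k + 1) - x k⟫| + δ k
        ≤ σ * γ k * breg φ φ' (x k) (prevSeq x xm k))
    -- `F` is bounded below, and `ζt` is the limit of the merit sequence
    (hFbdd : ∃ mlo : ℝ, ∀ y ∈ S, mlo ≤ P₁ y - P₂ y + f y)
    (ζt : ℝ) (hζ : Tendsto (meritSeq P₁ P₂ f φ φ' σ γmax x xm) atTop (𝓝 ζt)) :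
    (Summable (fun k => breg φ φ' (x (k + 1)) (x k))
      ∧ ∑' k, breg φ φ' (x (k + 1)) (x k)
          ≤ ((P₁ (x 0) - P₂ (x 0) + f (x 0)) + σ * γmax * breg φ φ' (x 0) xm - ζt)
              / (γmin - L - σ * γmax))
    ∧ (Summable (fun k => breg φ φ' (x k) (x (k + 1)))
      ∧ ∑' k, breg φ φ' (x k) (x (k + 1))
          ≤ ((P₁ (x 0) - P₂ (x 0) + f (x 0)) + σ * γmax * breg φ φ' (x 0) xm - ζt) / γmin)
    ∧ Tendsto (fun k => breg φ φ' (x (k + 1)) (x k)) atTop (𝓝 0)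
    ∧ Tendsto (fun k => breg φ φ' (x k) (x (k + 1))) atTop (𝓝 0)
    ∧ (Summable (fun k => breg φ φ' (x k) (prevSeq x xm k))
      ∧ Summable (fun k => ‖Δ k‖ ^ 2 + |⟪Δ k, x (k + 1) - x k⟫| + δ k)
      ∧ ∑' k, (‖Δ k‖ ^ 2 + |⟪Δ k, x (k + 1) - x k⟫| + δ k)
          ≤ σ * γmax * ∑' k, breg φ φ' (x k) (prevSeq x xm k))
    ∧ Tendsto (fun k => ‖Δ k‖) atTop (𝓝 0)
    ∧ Tendsto (fun k => |⟪Δ k, x (k + 1) - x k⟫|) atTop (𝓝 0)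
    ∧ Tendsto δ atTop (𝓝 0) := by
  have hxU : ∀ k, x k ∈ U := fun k => (hxmem k).1.2
  have hxS : ∀ k, x k ∈ S := fun k => (hxmem k).1.1
  have hxX : ∀ k, x k ∈ X := fun k => (hxmem k).2
  have hconv : ConvexOn ℝ U φ := hφsc.convexOn
  have ha0 : ∀ k, 0 ≤ breg φ φ' (x (k + 1)) (x k) :=
    fun k => breg_nonneg_of_convexOn hφdiff hconv (hxU (k + 1)) (hxU k)
  have hb0 : ∀ k, 0 ≤ breg φ φ' (x k) (x (k + 1)) :=
    fun k => breg_nonneg_of_convexOn hφdiff hconv (hxU k) (hxU (k + 1))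
  have hprevU : ∀ k, prevSeq x xm k ∈ U := by
    intro k
    unfold prevSeq
    split
    · exact hxm
    · exact hxU _
  have hw0 : ∀ k, 0 ≤ breg φ φ' (x k) (prevSeq x xm k) :=
    fun k => breg_nonneg_of_convexOn hφdiff hconv (hxU k) (hprevU k)
  have hγmin_pos : 0 < γmin := lt_of_le_of_lt hL hLγ
  have hγmax_pos : 0 < γmax := lt_of_lt_of_le hγmin_pos ((hγ 0).1.trans (hγ 0).2)
  have hc : 0 < γmin - L - σ * γmax := by
    have := (lt_div_iff₀ hγmax_pos).mp hσ
    linarith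
  set M : ℕ → ℝ := meritSeq P₁ P₂ f φ φ' σ γmax x xm with hMdef
  have hMsucc : ∀ k, M (k + 1) = P₁ (x (k + 1)) - P₂ (x (k + 1)) + f (x (k + 1))
      + σ * γmax * breg φ φ' (x (k + 1)) (x k) := by
    intro k
    simp [hMdef, meritSeq, prevSeq]
  have hMk : ∀ k, M k = P₁ (x k) - P₂ (x k) + f (x k)
      + σ * γmax * breg φ φ' (x k) (prevSeq x xm k) := by
    intro k; rfl
  -- key descent inequality
  have key : ∀ k, M (k + 1) + (γmin - L - σ * γmax) * breg φ φ' (x (k + 1)) (x k)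
      + γmin * breg φ φ' (x k) (x (k + 1)) ≤ M k := by
    intro k
    have h1 := hd k (x k) (hxS k)
    have h2 := hξ k (x (k + 1)) (Set.mem_univ _)
    have h3 := (abs_le.mp (hsmad (x k) (hxX k) (x (k + 1)) (hxX (k + 1)))).2
    have hflip : (⟪d (k + 1), x k - x (k + 1)⟫ : ℝ) = -⟪d (k + 1), x (k + 1) - x k⟫ := by
      rw [show x k - x (k + 1) = -(x (k + 1) - x k) by abel, inner_neg_right]
    rw [hflip] at h1
    have hip : (⟪Δ k, x (k + 1) - x k⟫ : ℝ)
        = ⟪d (k + 1), x (k + 1) - x k⟫ + ⟪f' (x k), x (k + 1) - x k⟫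
          - ⟪ξ k, x (k + 1) - x k⟫
          + γ k * (breg φ φ' (x (k + 1)) (x k) + breg φ φ' (x k) (x (k + 1))) := by
      rw [hΔ k, breg_add_breg φ φ' (x (k + 1)) (x k)]
      simp only [inner_add_left, inner_sub_left, real_inner_smul_left]
      try ring
    have hsc : (⟪Δ k, x (k + 1) - x k⟫ : ℝ) + δ k
        ≤ σ * γmax * breg φ φ' (x k) (prevSeq x xm k) := by
      have h := hSC2 k
      have h4 : (⟪Δ k, x (k + 1) - x k⟫ : ℝ) ≤ |⟪Δ k, x (k + 1) - x k⟫| := le_abs_self _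
      have h5 : σ * γ k * breg φ φ' (x k) (prevSeq x xm k)
          ≤ σ * γmax * breg φ φ' (x k) (prevSeq x xm k) := by
        nlinarith [hw0 k, (hγ k).2, hσ0, mul_nonneg hσ0 (hw0 k)]
      nlinarith [sq_nonneg ‖Δ k‖]
    have hma : γmin * breg φ φ' (x (k + 1)) (x k) ≤ γ k * breg φ φ' (x (k + 1)) (x k) :=
      mul_le_mul_of_nonneg_right (hγ k).1 (ha0 k)
    have hmb : γmin * breg φ φ' (x k) (x (k + 1)) ≤ γ k * breg φ φ' (x k) (x (k + 1)) :=
      mul_le_mul_of_nonneg_right (hγ k).1 (hb0 k)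
    rw [hMsucc k, hMk k]
    nlinarith [h1, h2, h3, hip, hsc]
  have hmono : ∀ k, M (k + 1) ≤ M k := by
    intro k
    nlinarith [key k, mul_nonneg hc.le (ha0 k), mul_nonneg hγmin_pos.le (hb0 k)]
  have hanti : Antitone M := antitone_nat_of_succ_le hmono
  have hlbM : ∀ N, ζt ≤ M N := by
    intro N
    exact le_of_tendsto hζ (eventually_atTop.2 ⟨N, fun m hm => hanti hm⟩)
  have htel : ∀ N, ∑ i ∈ Finset.range N,
      ((γmin - L - σ * γmax) * breg φ φ' (x (i + 1)) (x i)
        + γmin * breg φ φ' (x i) (x (i + 1))) ≤ M 0 - M N := by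
    intro N
    induction N with
    | zero => simp
    | succ N ih =>
        rw [Finset.sum_range_succ]
        have := key N
        linarith
  have hM0 : M 0 = (P₁ (x 0) - P₂ (x 0) + f (x 0)) + σ * γmax * breg φ φ' (x 0) xm := by
    simp [hMdef, meritSeq, prevSeq]
  -- bounds on partial sums
  have hAbound : ∀ N, ∑ i ∈ Finset.range N, breg φ φ' (x (i + 1)) (x i)
      ≤ ((P₁ (x 0) - P₂ (x 0) + f (x 0)) + σ * γmax * breg φ φ' (x 0) xm - ζt)
          / (γmin - L - σ * γmax) := by
    intro N
    rw [le_div_iff₀ hc]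
    have h1 : ∑ i ∈ Finset.range N, (γmin - L - σ * γmax) * breg φ φ' (x (i + 1)) (x i)
        ≤ M 0 - M N := by
      refine le_trans (Finset.sum_le_sum fun i _ => ?_) (htel N)
      nlinarith [mul_nonneg hγmin_pos.le (hb0 i)]
    have h2 : (∑ i ∈ Finset.range N, breg φ φ' (x (i + 1)) (x i)) * (γmin - L - σ * γmax)
        = ∑ i ∈ Finset.range N, (γmin - L - σ * γmax) * breg φ φ' (x (i + 1)) (x i) := by
      rw [Finset.sum_mul]
      exact Finset.sum_congr rfl fun i _ => mul_comm _ _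
    have := hlbM N
    rw [h2]
    linarith [hM0 ▸ h1]
  have hBbound : ∀ N, ∑ i ∈ Finset.range N, breg φ φ' (x i) (x (i + 1))
      ≤ ((P₁ (x 0) - P₂ (x 0) + f (x 0)) + σ * γmax * breg φ φ' (x 0) xm - ζt) / γmin := by
    intro N
    rw [le_div_iff₀ hγmin_pos]
    have h1 : ∑ i ∈ Finset.range N, γmin * breg φ φ' (x i) (x (i + 1)) ≤ M 0 - M N := by
      refine le_trans (Finset.sum_le_sum fun i _ => ?_) (htel N)
      nlinarith [mul_nonneg hc.le (ha0 i)]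
    have h2 : (∑ i ∈ Finset.range N, breg φ φ' (x i) (x (i + 1))) * γmin
        = ∑ i ∈ Finset.range N, γmin * breg φ φ' (x i) (x (i + 1)) := by
      rw [Finset.sum_mul]
      exact Finset.sum_congr rfl fun i _ => mul_comm _ _
    have := hlbM N
    rw [h2]
    linarith [hM0 ▸ h1]
  have hsumA : Summable (fun k => breg φ φ' (x (k + 1)) (x k)) :=
    summable_of_sum_range_le ha0 hAbound
  have hsumB : Summable (fun k => breg φ φ' (x k) (x (k + 1))) :=
    summable_of_sum_range_le hb0 hBbound
  have htsumA := Summable.tsum_le_of_sum_range_le hsumA hAbound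
  have htsumB := Summable.tsum_le_of_sum_range_le hsumB hBbound
  -- summability of the shifted sequence
  have hWsucc : ∀ k, breg φ φ' (x (k + 1)) (prevSeq x xm (k + 1))
      = breg φ φ' (x (k + 1)) (x k) := by
    intro k; simp [prevSeq]
  have hsumW : Summable (fun k => breg φ φ' (x k) (prevSeq x xm k)) := by
    refine (summable_nat_add_iff 1).mp ?_
    exact hsumA.congr fun k => (hWsucc k).symm
  -- comparison with (SC2)
  have hgle : ∀ k, ‖Δ k‖ ^ 2 + |⟪Δ k, x (k + 1) - x k⟫| + δ k
      ≤ σ * γmax * breg φ φ' (x k) (prevSeq x xm k) := by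
    intro k
    have h := hSC2 k
    have h5 : σ * γ k * breg φ φ' (x k) (prevSeq x xm k)
        ≤ σ * γmax * breg φ φ' (x k) (prevSeq x xm k) := by
      nlinarith [hw0 k, (hγ k).2, hσ0, mul_nonneg hσ0 (hw0 k)]
    linarith
  have hg0 : ∀ k, 0 ≤ ‖Δ k‖ ^ 2 + |⟪Δ k, x (k + 1) - x k⟫| + δ k := by
    intro k
    have := sq_nonneg ‖Δ k‖
    have := abs_nonneg (⟪Δ k, x (k + 1) - x k⟫ : ℝ)
    have := hδpos k
    linarith
  have hsumg : Summable (fun k => ‖Δ k‖ ^ 2 + |⟪Δ k, x (k + 1) - x k⟫| + δ k) :=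
    Summable.of_nonneg_of_le hg0 hgle (hsumW.mul_left (σ * γmax))
  have htsumg : ∑' k, (‖Δ k‖ ^ 2 + |⟪Δ k, x (k + 1) - x k⟫| + δ k)
      ≤ σ * γmax * ∑' k, breg φ φ' (x k) (prevSeq x xm k) := by
    calc ∑' k, (‖Δ k‖ ^ 2 + |⟪Δ k, x (k + 1) - x k⟫| + δ k)
        ≤ ∑' k, σ * γmax * breg φ φ' (x k) (prevSeq x xm k) :=
          Summable.tsum_le_tsum hgle hsumg (hsumW.mul_left (σ * γmax))
      _ = σ * γmax * ∑' k, breg φ φ' (x k) (prevSeq x xm k) := tsum_mul_left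
  -- limits
  have hta := hsumA.tendsto_atTop_zero
  have htb := hsumB.tendsto_atTop_zero
  have htg := hsumg.tendsto_atTop_zero
  have hΔsq : Tendsto (fun k => ‖Δ k‖ ^ 2) atTop (𝓝 0) := by
    refine squeeze_zero (fun k => sq_nonneg _) (fun k => ?_) htg
    have := abs_nonneg (⟪Δ k, x (k + 1) - x k⟫ : ℝ)
    have := hδpos k
    linarith
  have hΔnorm : Tendsto (fun k => ‖Δ k‖) atTop (𝓝 0) := by
    have h := (Real.continuous_sqrt.tendsto 0).comp hΔsq
    simp only [Function.comp, Real.sqrt_zero] at h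
    exact Tendsto.congr (fun k => Real.sqrt_sq (norm_nonneg _)) h
  have hΔinner : Tendsto (fun k => |⟪Δ k, x (k + 1) - x k⟫|) atTop (𝓝 0) := by
    refine squeeze_zero (fun k => abs_nonneg _) (fun k => ?_) htg
    have := sq_nonneg ‖Δ k‖
    have := hδpos k
    linarith
  have hδt : Tendsto δ atTop (𝓝 0) := by
    refine squeeze_zero hδpos (fun k => ?_) htg
    have := sq_nonneg ‖Δ k‖
    have := abs_nonneg (⟪Δ k, x (k + 1) - x k⟫ : ℝ)
    linarith
  exact ⟨⟨hsumA, htsumA⟩, ⟨hsumB, htsumB⟩, hta, htb, ⟨hsumW, hsumg, htsumg⟩,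
    hΔnorm, hΔinner, hδt⟩
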